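/- Let β₁ ≤ ⋯ ≤ β_p be reals with βᵢ ≤ 1 for i ≤ m and βᵢ ≥ 1 for i > m (1 ≤ m ≤ p−1), satisfying ∑_{i=1}^m (n+p−1−2i)(βᵢ−1) + ∑_{i=m+1}^p (n+p+1−2i)(βᵢ−1) ≤ 0 and ∑_{i=1}^p βᵢ⁻¹ ≤ p, with all βᵢ > 0. Then for any l₁ > ⋯ > l_p > 0 and dᵢ = lᵢ/∑ⱼlⱼ: (∑ⱼlⱼ)⁻¹[2∑_{i<j}(βᵢ−βⱼ)lⱼ/(lᵢ−lⱼ) + ∑ᵢ(n+p+1−2i−2dᵢ)(βᵢ−1)] − log∏ᵢβᵢ ≤ 0. -/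

import Mathlib

/-- Pointwise inequality underlying the dominance result (Theorem 2): under the
three conditions on `β`, the risk-difference integrand is nonpositive. -/
theorem stmt17 (n p m : ℕ) (hp : 2 ≤ p) (hnp : p ≤ n)
    (hm1 : 1 ≤ m) (hm2 : m ≤ p - 1)
    (β : ℕ → ℝ)
    (hβpos : ∀ i ∈ Finset.Icc 1 p, 0 < β i)
    (hβmono : ∀ i j, 1 ≤ i → i ≤ j → j ≤ p → β i ≤ β j)
    (hβle : ∀ i ∈ Finset.Icc 1 m, β i ≤ 1)
    (hβge : ∀ i ∈ Finset.Icc (m + 1) p, 1 ≤ β i)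
    (hcond2 : (∑ i ∈ Finset.Icc 1 m, ((n : ℝ) + p - 1 - 2 * i) * (β i - 1)) +
        (∑ i ∈ Finset.Icc (m + 1) p, ((n : ℝ) + p + 1 - 2 * i) * (β i - 1)) ≤ 0)
    (hcond3 : ∑ i ∈ Finset.Icc 1 p, (β i)⁻¹ ≤ (p : ℝ))
    (l d : ℕ → ℝ)
    (hl : ∀ i j, 1 ≤ i → i < j → j ≤ p → l j < l i)
    (hlpos : ∀ i ∈ Finset.Icc 1 p, 0 < l i)
    (hd : ∀ i, d i = l i / ∑ j ∈ Finset.Icc 1 p, l j) :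
    (∑ j ∈ Finset.Icc 1 p, l j)⁻¹ *
        (2 * ∑ i ∈ Finset.Icc 1 p, ∑ j ∈ Finset.Icc (i + 1) p,
            (β i - β j) * l j / (l i - l j)
          + ∑ i ∈ Finset.Icc 1 p, ((n : ℝ) + p + 1 - 2 * i - 2 * d i) * (β i - 1))
      - Real.log (∏ i ∈ Finset.Icc 1 p, β i) ≤ 0 := by
  have hSpos : 0 < ∑ j ∈ Finset.Icc 1 p, l j :=
    Finset.sum_pos hlpos ⟨1, Finset.mem_Icc.mpr ⟨le_refl 1, by omega⟩⟩
  -- cross-term sum is nonpositive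
  have hA : (∑ i ∈ Finset.Icc 1 p, ∑ j ∈ Finset.Icc (i + 1) p,
      (β i - β j) * l j / (l i - l j)) ≤ 0 := by
    apply Finset.sum_nonpos
    intro i hi
    apply Finset.sum_nonpos
    intro j hj
    simp only [Finset.mem_Icc] at hi hj
    have h1 : l j < l i := hl i j hi.1 (by omega) hj.2
    have h2 : 0 < l j := hlpos j (Finset.mem_Icc.mpr ⟨by omega, hj.2⟩)
    have h3 : β i ≤ β j := hβmono i j hi.1 (by omega) hj.2
    apply div_nonpos_of_nonpos_of_nonneg
    · exact mul_nonpos_of_nonpos_of_nonneg (by linarith) h2.le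
    · linarith
  -- bounds on d
  have hdb : ∀ i ∈ Finset.Icc 1 p, 0 ≤ d i ∧ d i ≤ 1 := by
    intro i hi
    have h2 : 0 < l i := hlpos i hi
    have h3 : l i ≤ ∑ j ∈ Finset.Icc 1 p, l j :=
      Finset.single_le_sum (fun j hj => (hlpos j hj).le) hi
    rw [hd i]
    exact ⟨div_nonneg h2.le hSpos.le, (div_le_one hSpos).mpr h3⟩
  -- splitting lemma
  have hsplit : ∀ f : ℕ → ℝ, ∑ i ∈ Finset.Icc 1 p, f i =
      (∑ i ∈ Finset.Icc 1 m, f i) + ∑ i ∈ Finset.Icc (m + 1) p, f i := by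
    intro f
    rw [show Finset.Icc 1 p = Finset.Ioc 0 p by rfl,
      show Finset.Icc 1 m = Finset.Ioc 0 m by rfl,
      show Finset.Icc (m + 1) p = Finset.Ioc m p by rw [Finset.Icc_add_one_left_eq_Ioc]]
    exact (Finset.sum_Ioc_consecutive f (by omega) (by omega)).symm
  -- second sum nonpositive
  have hB : (∑ i ∈ Finset.Icc 1 p, ((n : ℝ) + p + 1 - 2 * i - 2 * d i) * (β i - 1)) ≤ 0 := by
    rw [hsplit]
    have hB1 : (∑ i ∈ Finset.Icc 1 m, ((n : ℝ) + p + 1 - 2 * i - 2 * d i) * (β i - 1)) ≤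
        ∑ i ∈ Finset.Icc 1 m, ((n : ℝ) + p - 1 - 2 * i) * (β i - 1) := by
      apply Finset.sum_le_sum
      intro i hi
      simp only [Finset.mem_Icc] at hi
      have hd1 : d i ≤ 1 := (hdb i (Finset.mem_Icc.mpr ⟨hi.1, by omega⟩)).2
      have hb1 : β i ≤ 1 := hβle i (Finset.mem_Icc.mpr hi)
      nlinarith [mul_nonneg (by linarith : (0:ℝ) ≤ 1 - d i) (by linarith : (0:ℝ) ≤ 1 - β i)]
    have hB2 : (∑ i ∈ Finset.Icc (m + 1) p, ((n : ℝ) + p + 1 - 2 * i - 2 * d i) * (β i - 1)) ≤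
        ∑ i ∈ Finset.Icc (m + 1) p, ((n : ℝ) + p + 1 - 2 * i) * (β i - 1) := by
      apply Finset.sum_le_sum
      intro i hi
      simp only [Finset.mem_Icc] at hi
      have hd0 : 0 ≤ d i := (hdb i (Finset.mem_Icc.mpr ⟨by omega, hi.2⟩)).1
      have hb1 : 1 ≤ β i := hβge i (Finset.mem_Icc.mpr hi)
      nlinarith [mul_nonneg hd0 (by linarith : (0:ℝ) ≤ β i - 1)]
    linarith
  -- log of product is nonnegative
  have hlog : 0 ≤ Real.log (∏ i ∈ Finset.Icc 1 p, β i) := by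
    rw [Real.log_prod (fun i hi => (hβpos i hi).ne')]
    have hterm : ∀ i ∈ Finset.Icc 1 p, 1 - (β i)⁻¹ ≤ Real.log (β i) := by
      intro i hi
      have h := Real.log_le_sub_one_of_pos (inv_pos.mpr (hβpos i hi))
      rw [Real.log_inv] at h
      linarith
    have h1 : (0:ℝ) ≤ ∑ i ∈ Finset.Icc 1 p, (1 - (β i)⁻¹) := by
      rw [Finset.sum_sub_distrib, Finset.sum_const, Nat.card_Icc]
      have : (p + 1 - 1) • (1:ℝ) = (p:ℝ) := by simp
      rw [this]
      linarith
    calc (0:ℝ) ≤ ∑ i ∈ Finset.Icc 1 p, (1 - (β i)⁻¹) := h1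
      _ ≤ ∑ i ∈ Finset.Icc 1 p, Real.log (β i) := Finset.sum_le_sum hterm
  have hmain : (∑ j ∈ Finset.Icc 1 p, l j)⁻¹ *
      (2 * ∑ i ∈ Finset.Icc 1 p, ∑ j ∈ Finset.Icc (i + 1) p,
          (β i - β j) * l j / (l i - l j)
        + ∑ i ∈ Finset.Icc 1 p, ((n : ℝ) + p + 1 - 2 * i - 2 * d i) * (β i - 1)) ≤ 0 :=
    mul_nonpos_of_nonneg_of_nonpos (inv_nonneg.mpr hSpos.le) (by linarith)
  linarith
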